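/- arXiv:2303.12306 — 4 statements merged into one kernel-verified Lean document; each statement's English description precedes it below -/
import Mathlib

section
/- For every formula φ in graded modal logic (CML) over a knowledge graph with L sub-formulas, there exists a GNN with L layers, feature dimension L, combination matrix C, relation-specific aggregation matrices A_R, bias vector b, and truncated-ReLU activation σ(x)=min(max(0,x),1), such that for every entity v and every layer i ≥ ℓ, the ℓ-th component of the layer-i representation of v equals 1 if the ℓ-th sub-formula is satisfied at v and 0 otherwise. -/
attribute [local instance] Classical.propDecidable

structure KG (V : Type) (Rel : Type) (P : Type) where
  triple : V → Rel → V → Prop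
  pred : P → V → Prop

noncomputable def KG.nbrs {V Rel P : Type} [Fintype V] (K : KG V Rel P) (r : Rel) (v : V) :
    Finset V :=
  Finset.univ.filter (fun u => K.triple u r v)

/-- Canonical depth-`L` unraveling trees: a node carries the set of satisfied
atomic predicates and, for each relation, a multiset of children. Two unraveling
trees are isomorphic (via a root-preserving, label-preserving isomorphism)
iff their canonical representations are equal. -/
def UTree (Rel P : Type) : ℕ → Type
  | 0 => Set P
  | L + 1 => Set P × (Rel → Multiset (UTree Rel P L))

noncomputable def KG.unravel {V Rel P : Type} [Fintype V] (K : KG V Rel P) :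
    (L : ℕ) → V → UTree Rel P L
  | 0, v => ({p | K.pred p v} : Set P)
  | L + 1, v => (({p | K.pred p v} : Set P), fun r => (K.nbrs r v).val.map (K.unravel L))

/-- Counting bisimilarity: isomorphic unraveling trees at every depth. -/
def Bisim {V V' Rel P : Type} [Fintype V] [Fintype V'] (K : KG V Rel P) (v : V)
    (K' : KG V' Rel P) (v' : V') : Prop :=
  ∀ L : ℕ, K.unravel L v = K'.unravel L v'

/-- Graded modal logic (CML) formulas. -/
inductive CML (Rel P : Type) : Type
  | top : CML Rel P
  | pred (p : P) : CML Rel P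
  | not (φ : CML Rel P) : CML Rel P
  | and (φ ψ : CML Rel P) : CML Rel P
  | exge (N : ℕ) (r : Rel) (φ : CML Rel P) : CML Rel P

noncomputable def CML.sat {V Rel P : Type} [Fintype V] (K : KG V Rel P) :
    CML Rel P → V → Prop
  | .top, _ => True
  | .pred p, v => K.pred p v
  | .not φ, v => ¬ CML.sat K φ v
  | .and φ ψ, v => CML.sat K φ v ∧ CML.sat K ψ v
  | .exge N r φ, v => N ≤ ((K.nbrs r v).filter (fun u => CML.sat K φ u)).card

/-- Truncated ReLU activation. -/
noncomputable def trunc (x : ℝ) : ℝ := min (max 0 x) 1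

section GNNAux

lemma trunc_of_one_le {x : ℝ} (h : 1 ≤ x) : trunc x = 1 := by
  have h0 : (0:ℝ) ≤ x := by linarith
  rw [trunc, max_eq_right h0, min_eq_right h]

lemma trunc_of_nonpos {x : ℝ} (h : x ≤ 0) : trunc x = 0 := by
  rw [trunc, max_eq_left h, min_eq_left (by norm_num)]

variable {Rel P : Type} [Fintype Rel] {L : ℕ} (sub : Fin L → CML Rel P)
variable (hnot : ∀ (ℓ : Fin L) (ψ : CML Rel P), sub ℓ = CML.not ψ →
      ∃ k : Fin L, k < ℓ ∧ sub k = ψ)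
variable (hand : ∀ (ℓ : Fin L) (ψ χ : CML Rel P), sub ℓ = CML.and ψ χ →
      (∃ j : Fin L, j < ℓ ∧ sub j = ψ) ∧ (∃ k : Fin L, k < ℓ ∧ sub k = χ))
variable (hexge : ∀ (ℓ : Fin L) (N : ℕ) (r : Rel) (ψ : CML Rel P), sub ℓ = CML.exge N r ψ →
      ∃ k : Fin L, k < ℓ ∧ sub k = ψ)

noncomputable def jA : Fin L → Fin L := fun ℓ =>
  match h : sub ℓ with
  | .not ψ => (hnot ℓ ψ h).choose
  | .and ψ χ => ((hand ℓ ψ χ h).1).choose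
  | .exge N r ψ => (hexge ℓ N r ψ h).choose
  | _ => ℓ

noncomputable def jB : Fin L → Fin L := fun ℓ =>
  match h : sub ℓ with
  | .and ψ χ => ((hand ℓ ψ χ h).2).choose
  | _ => ℓ

lemma jA_not {ℓ : Fin L} {ψ : CML Rel P} (h : sub ℓ = CML.not ψ) :
    jA sub hnot hand hexge ℓ < ℓ ∧ sub (jA sub hnot hand hexge ℓ) = ψ := by
  unfold jA
  split
  · rename_i ψ' heq
    obtain rfl : ψ = ψ' := by have := h.symm.trans heq; injection this
    exact (hnot ℓ ψ heq).choose_spec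
  · rename_i ψ' χ' heq; exact (nomatch (h.symm.trans heq))
  · rename_i N' r' ψ' heq; exact (nomatch (h.symm.trans heq))
  · rename_i hno _ _; exact absurd h (fun hh => hno ψ hh)

lemma jA_and {ℓ : Fin L} {ψ χ : CML Rel P} (h : sub ℓ = CML.and ψ χ) :
    jA sub hnot hand hexge ℓ < ℓ ∧ sub (jA sub hnot hand hexge ℓ) = ψ := by
  unfold jA
  split
  · rename_i ψ' heq; exact (nomatch (h.symm.trans heq))
  · rename_i ψ' χ' heq
    obtain ⟨rfl, rfl⟩ : ψ = ψ' ∧ χ = χ' := by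
      have := h.symm.trans heq; injection this with h1 h2; exact ⟨h1, h2⟩
    exact ((hand ℓ ψ χ heq).1).choose_spec
  · rename_i N' r' ψ' heq; exact (nomatch (h.symm.trans heq))
  · rename_i _ hno _; exact absurd h (fun hh => hno ψ χ hh)

lemma jA_exge {ℓ : Fin L} {N : ℕ} {r : Rel} {ψ : CML Rel P} (h : sub ℓ = CML.exge N r ψ) :
    jA sub hnot hand hexge ℓ < ℓ ∧ sub (jA sub hnot hand hexge ℓ) = ψ := by
  unfold jA
  split
  · rename_i ψ' heq; exact (nomatch (h.symm.trans heq))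
  · rename_i ψ' χ' heq; exact (nomatch (h.symm.trans heq))
  · rename_i N' r' ψ' heq
    obtain ⟨rfl, rfl, rfl⟩ : N = N' ∧ r = r' ∧ ψ = ψ' := by
      have := h.symm.trans heq; injection this with h1 h2 h3; exact ⟨h1, h2, h3⟩
    exact (hexge ℓ N r ψ heq).choose_spec
  · rename_i _ _ hno; exact absurd h (fun hh => hno N r ψ hh)

lemma jB_and {ℓ : Fin L} {ψ χ : CML Rel P} (h : sub ℓ = CML.and ψ χ) :
    jB sub hand ℓ < ℓ ∧ sub (jB sub hand ℓ) = χ := by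
  unfold jB
  split
  · rename_i ψ' χ' heq
    obtain ⟨rfl, rfl⟩ : ψ = ψ' ∧ χ = χ' := by
      have := h.symm.trans heq; injection this with h1 h2; exact ⟨h1, h2⟩
    exact ((hand ℓ ψ χ heq).2).choose_spec
  · rename_i hno; exact absurd h (fun hh => hno ψ χ hh)


noncomputable def Cmat : Fin L → Fin L → ℝ := fun j ℓ =>
  match sub ℓ with
  | .top => 0
  | .pred _ => if j = ℓ then 1 else 0
  | .not _ => if j = jA sub hnot hand hexge ℓ then -1 else 0
  | .and _ _ => (if j = jA sub hnot hand hexge ℓ then (1:ℝ) else 0) +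
      (if j = jB sub hand ℓ then (1:ℝ) else 0)
  | .exge _ _ _ => 0

noncomputable def Amat : Rel → Fin L → Fin L → ℝ := fun r j ℓ =>
  match sub ℓ with
  | .exge _ r' _ => if r = r' ∧ j = jA sub hnot hand hexge ℓ then 1 else 0
  | _ => 0

noncomputable def bvec : Fin L → ℝ := fun ℓ =>
  match sub ℓ with
  | .top => 1
  | .pred _ => 0
  | .not _ => 1
  | .and _ _ => -1
  | .exge N _ _ => 1 - (N : ℝ)

variable {V : Type} [Fintype V] (K : KG V Rel P)

noncomputable def feat : ℕ → V → Fin L → ℝ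
  | 0 => fun v ℓ => if (∃ p, sub ℓ = CML.pred p ∧ K.pred p v) then 1 else 0
  | i + 1 => fun v ℓ =>
      trunc ((∑ j, feat i v j * Cmat sub hnot hand hexge j ℓ) +
        (∑ r : Rel, ∑ u ∈ K.nbrs r v, ∑ j, feat i u j * Amat sub hnot hand hexge r j ℓ) +
        bvec sub ℓ)

lemma feat_correct : ∀ (i : ℕ) (v : V) (ℓ : Fin L),
    ((ℓ : ℕ) < i ∨ ∃ p, sub ℓ = CML.pred p) →
    feat sub hnot hand hexge K i v ℓ = if CML.sat K (sub ℓ) v then 1 else 0 := by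
  intro i
  induction i with
  | zero =>
    intro v ℓ h
    rcases h with h | ⟨p, hp⟩
    · omega
    · have hfz : feat sub hnot hand hexge K 0 v ℓ =
          if (∃ p, sub ℓ = CML.pred p ∧ K.pred p v) then 1 else 0 := rfl
      rw [hfz, hp]
      rw [show CML.sat K (CML.pred p) v = K.pred p v from rfl]
      by_cases hpv : K.pred p v
      · rw [if_pos hpv, if_pos (show ∃ p', CML.pred p = CML.pred p' ∧ K.pred p' v
          from ⟨p, rfl, hpv⟩)]
      · rw [if_neg hpv, if_neg]
        rintro ⟨p', hp', hpv'⟩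
        obtain rfl : p = p' := by injection hp'
        exact hpv hpv'
  | succ i ih =>
    intro v ℓ h
    rw [feat]
    cases hsub : sub ℓ with
    | top =>
      have hC : ∀ j, Cmat sub hnot hand hexge j ℓ = 0 := fun j => by simp [Cmat, hsub]
      have hA : ∀ r j, Amat sub hnot hand hexge r j ℓ = 0 := fun r j => by simp [Amat, hsub]
      simp only [hC, hA, mul_zero, Finset.sum_const_zero, bvec, hsub, add_zero, zero_add]
      rw [trunc_of_one_le le_rfl]
      simp [CML.sat]
    | pred p =>
      have hval := ih v ℓ (Or.inr ⟨p, hsub⟩)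
      have hC : ∀ j, Cmat sub hnot hand hexge j ℓ = if j = ℓ then 1 else 0 :=
        fun j => by simp [Cmat, hsub]
      have hA : ∀ r j, Amat sub hnot hand hexge r j ℓ = 0 := fun r j => by simp [Amat, hsub]
      simp only [hC, hA, mul_zero, Finset.sum_const_zero, bvec, hsub, add_zero,
        mul_ite, mul_one, Finset.sum_ite_eq', Finset.mem_univ, if_true]
      rw [hsub] at hval
      rw [hval]
      by_cases hs : CML.sat K (CML.pred p) v
      · simp only [if_pos hs]
        exact trunc_of_one_le le_rfl
      · simp only [if_neg hs]
        exact trunc_of_nonpos le_rfl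
    | not ψ =>
      have hℓi : (ℓ : ℕ) < i + 1 := by
        rcases h with h | ⟨p, hp⟩
        · exact h
        · rw [hsub] at hp; exact (nomatch hp)
      obtain ⟨hklt, hkψ⟩ := jA_not sub hnot hand hexge hsub
      set k := jA sub hnot hand hexge ℓ with hk
      have hki : (k : ℕ) < i := by
        have : (k : ℕ) < (ℓ : ℕ) := hklt
        omega
      have hval := ih v k (Or.inl hki)
      have hC : ∀ j, Cmat sub hnot hand hexge j ℓ = if j = k then -1 else 0 :=
        fun j => by simp [Cmat, hsub, hk]
      have hA : ∀ r j, Amat sub hnot hand hexge r j ℓ = 0 := fun r j => by simp [Amat, hsub]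
      simp only [hC, hA, mul_zero, Finset.sum_const_zero, bvec, hsub, add_zero,
        mul_ite, mul_neg, mul_one, Finset.sum_ite_eq', Finset.mem_univ, if_true]
      rw [hval, hkψ]
      rw [show CML.sat K (CML.not ψ) v = ¬ CML.sat K ψ v from rfl]
      by_cases hs : CML.sat K ψ v
      · rw [if_pos hs, if_neg (by simpa using hs)]
        exact trunc_of_nonpos (by norm_num)
      · rw [if_neg hs, if_pos (by simpa using hs)]
        exact trunc_of_one_le (by norm_num)
    | and ψ χ =>
      have hℓi : (ℓ : ℕ) < i + 1 := by
        rcases h with h | ⟨p, hp⟩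
        · exact h
        · rw [hsub] at hp; exact (nomatch hp)
      obtain ⟨hklt, hkψ⟩ := jA_and sub hnot hand hexge hsub
      obtain ⟨hmlt, hmχ⟩ := jB_and sub hand hsub
      set k := jA sub hnot hand hexge ℓ with hk
      set m := jB sub hand ℓ with hm
      have hki : (k : ℕ) < i := by have : (k : ℕ) < (ℓ : ℕ) := hklt; omega
      have hmi : (m : ℕ) < i := by have : (m : ℕ) < (ℓ : ℕ) := hmlt; omega
      have hvk := ih v k (Or.inl hki)
      have hvm := ih v m (Or.inl hmi)
      have hC : ∀ j, Cmat sub hnot hand hexge j ℓ =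
          (if j = k then (1:ℝ) else 0) + (if j = m then (1:ℝ) else 0) :=
        fun j => by simp [Cmat, hsub, hk, hm]
      have hA : ∀ r j, Amat sub hnot hand hexge r j ℓ = 0 := fun r j => by simp [Amat, hsub]
      simp only [hC, hA, mul_zero, Finset.sum_const_zero, bvec, hsub, add_zero, mul_add,
        Finset.sum_add_distrib, mul_ite, mul_one, Finset.sum_ite_eq', Finset.mem_univ, if_true]
      rw [hvk, hvm, hkψ, hmχ]
      rw [show CML.sat K (CML.and ψ χ) v = (CML.sat K ψ v ∧ CML.sat K χ v) from rfl]
      by_cases hs1 : CML.sat K ψ v <;> by_cases hs2 : CML.sat K χ v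
      · rw [if_pos hs1, if_pos hs2, if_pos ⟨hs1, hs2⟩]
        exact trunc_of_one_le (by norm_num)
      · rw [if_pos hs1, if_neg hs2, if_neg (fun hh => hs2 hh.2)]
        exact trunc_of_nonpos (by norm_num)
      · rw [if_neg hs1, if_pos hs2, if_neg (fun hh => hs1 hh.1)]
        exact trunc_of_nonpos (by norm_num)
      · rw [if_neg hs1, if_neg hs2, if_neg (fun hh => hs1 hh.1)]
        exact trunc_of_nonpos (by norm_num)
    | exge N r ψ =>
      have hℓi : (ℓ : ℕ) < i + 1 := by
        rcases h with h | ⟨p, hp⟩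
        · exact h
        · rw [hsub] at hp; exact (nomatch hp)
      obtain ⟨hklt, hkψ⟩ := jA_exge sub hnot hand hexge hsub
      set k := jA sub hnot hand hexge ℓ with hk
      have hki : (k : ℕ) < i := by have : (k : ℕ) < (ℓ : ℕ) := hklt; omega
      have hC : ∀ j, Cmat sub hnot hand hexge j ℓ = 0 := fun j => by simp [Cmat, hsub]
      have hA : ∀ r' j, Amat sub hnot hand hexge r' j ℓ =
          if r' = r ∧ j = k then 1 else 0 := fun r' j => by simp [Amat, hsub, hk]
      have hS2 : (∑ r' : Rel, ∑ u ∈ K.nbrs r' v, ∑ j,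
          feat sub hnot hand hexge K i u j * Amat sub hnot hand hexge r' j ℓ) =
          ((K.nbrs r v).filter (fun u => CML.sat K ψ u)).card := by
        have hinner : ∀ (r' : Rel) (u : V), (∑ j, feat sub hnot hand hexge K i u j *
            Amat sub hnot hand hexge r' j ℓ) =
            if r' = r then (if CML.sat K ψ u then (1:ℝ) else 0) else 0 := by
          intro r' u
          by_cases hr : r' = r
          · subst hr
            have : ∀ j : Fin L, feat sub hnot hand hexge K i u j *
                Amat sub hnot hand hexge r' j ℓ =
                if j = k then feat sub hnot hand hexge K i u k else 0 := by
              intro j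
              rw [hA]
              by_cases hj : j = k
              · subst hj; simp
              · simp [hj]
            rw [Finset.sum_congr rfl (fun j _ => this j), Finset.sum_ite_eq'
              Finset.univ k (fun _ => feat sub hnot hand hexge K i u k)]
            simp only [Finset.mem_univ, if_true]
            rw [ih u k (Or.inl hki), hkψ]
          · simp only [if_neg hr]
            apply Finset.sum_eq_zero
            intro j _
            rw [hA, if_neg (fun hh => hr hh.1), mul_zero]
        calc (∑ r' : Rel, ∑ u ∈ K.nbrs r' v, ∑ j,
              feat sub hnot hand hexge K i u j * Amat sub hnot hand hexge r' j ℓ)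
            = ∑ r' : Rel, ∑ u ∈ K.nbrs r' v,
              (if r' = r then (if CML.sat K ψ u then (1:ℝ) else 0) else 0) := by
              refine Finset.sum_congr rfl fun r' _ => Finset.sum_congr rfl fun u _ => hinner r' u
          _ = ∑ r' : Rel, (if r' = r then
              (∑ u ∈ K.nbrs r' v, (if CML.sat K ψ u then (1:ℝ) else 0)) else 0) := by
              refine Finset.sum_congr rfl fun r' _ => ?_
              by_cases hr : r' = r <;> simp [hr]
          _ = ∑ u ∈ K.nbrs r v, (if CML.sat K ψ u then (1:ℝ) else 0) := by
              rw [Finset.sum_ite_eq' Finset.univ r]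
              simp
          _ = ((K.nbrs r v).filter (fun u => CML.sat K ψ u)).card := by
              rw [Finset.sum_ite, Finset.sum_const, Finset.sum_const_zero]
              simp
      simp only [hC, mul_zero, Finset.sum_const_zero, zero_add, hS2, bvec, hsub]
      rw [show CML.sat K (CML.exge N r ψ) v =
        (N ≤ ((K.nbrs r v).filter (fun u => CML.sat K ψ u)).card) from rfl]
      by_cases hs : N ≤ ((K.nbrs r v).filter (fun u => CML.sat K ψ u)).card
      · rw [if_pos hs]
        apply trunc_of_one_le
        have : (N : ℝ) ≤ (((K.nbrs r v).filter (fun u => CML.sat K ψ u)).card : ℝ) := by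
          exact_mod_cast hs
        linarith
      · rw [if_neg hs]
        apply trunc_of_nonpos
        have : (((K.nbrs r v).filter (fun u => CML.sat K ψ u)).card : ℝ) + 1 ≤ (N : ℝ) := by
          have : ((K.nbrs r v).filter (fun u => CML.sat K ψ u)).card + 1 ≤ N := by omega
          exact_mod_cast this
        linarith

end GNNAux

/-- every CML formula, via an enumeration of its `L` sub-formulas
closed under the sub-formula ordering, is encoded by an `L`-dimensional GNN with
combination matrix `C`, relation matrices `A`, bias `b` and truncated ReLU: for
every entity `v` and every layer `i` at least the (1-based) index of the
sub-formula, the corresponding component is `1` iff the sub-formula holds at `v`. -/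
theorem gnn_encodes_cml {V Rel P : Type} [Fintype V] [Fintype Rel] (K : KG V Rel P)
    (L : ℕ) (hL : 0 < L) (φ : CML Rel P) (sub : Fin L → CML Rel P)
    (hlast : sub ⟨L - 1, by omega⟩ = φ)
    (hnot : ∀ (ℓ : Fin L) (ψ : CML Rel P), sub ℓ = CML.not ψ →
      ∃ k : Fin L, k < ℓ ∧ sub k = ψ)
    (hand : ∀ (ℓ : Fin L) (ψ χ : CML Rel P), sub ℓ = CML.and ψ χ →
      (∃ j : Fin L, j < ℓ ∧ sub j = ψ) ∧ (∃ k : Fin L, k < ℓ ∧ sub k = χ))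
    (hexge : ∀ (ℓ : Fin L) (N : ℕ) (r : Rel) (ψ : CML Rel P), sub ℓ = CML.exge N r ψ →
      ∃ k : Fin L, k < ℓ ∧ sub k = ψ) :
    ∃ (C : Fin L → Fin L → ℝ) (A : Rel → Fin L → Fin L → ℝ) (b : Fin L → ℝ)
      (e : ℕ → V → Fin L → ℝ),
      (∀ (v : V) (ℓ : Fin L),
        e 0 v ℓ = if (∃ p, sub ℓ = CML.pred p ∧ K.pred p v) then 1 else 0) ∧
      (∀ (i : ℕ) (v : V) (ℓ : Fin L), e (i + 1) v ℓ =
        trunc ((∑ j, e i v j * C j ℓ) +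
          (∑ r : Rel, ∑ u ∈ K.nbrs r v, ∑ j, e i u j * A r j ℓ) + b ℓ)) ∧
      (∀ (ℓ : Fin L) (i : ℕ), (ℓ : ℕ) < i → ∀ v : V,
        e i v ℓ = if CML.sat K (sub ℓ) v then 1 else 0) := by
  refine ⟨Cmat sub hnot hand hexge, Amat sub hnot hand hexge, bvec sub,
    feat sub hnot hand hexge K, ?_, ?_, ?_⟩
  · intro v ℓ; rfl
  · intro i v ℓ; rfl
  · intro ℓ i hi v
    exact feat_correct sub hnot hand hexge K i v ℓ (Or.inl hi)
end

section
/- If a CML sub-formula φ_ℓ(x) = ∃^{≥N} y (R_j(y,x) ∧ φ_k(y)) and the (i−1)-th layer representations correctly encode φ_k in component k for all entities, then setting (A_{R_j})_{kℓ}=1 and b_ℓ=−N+1 with activation σ(x)=min(max(0,x),1) yields (e_v^i)_ℓ = 1 if the number of R_j-neighbors u of v satisfying φ_k is at least N, and 0 otherwise. -/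
attribute [local instance] Classical.propDecidable

/-- counting-quantifier case of the GNN layer. With
`(A_{R_j})_{kℓ} = 1` and `b_ℓ = -N+1`, the truncated-ReLU of the sum over
`R_j`-neighbors of the (correct) component `k` is `1` iff at least `N`
neighbors satisfy `φₖ`. -/
theorem gnn_layer_exge {V Rel P : Type} [Fintype V] (K : KG V Rel P)
    (N : ℕ) (r : Rel) (φk : CML Rel P) (v : V) (g : V → ℝ)
    (hg : ∀ u : V, g u = if CML.sat K φk u then 1 else 0) :
    trunc ((∑ u ∈ K.nbrs r v, g u * 1) + (-(N : ℝ) + 1)) =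
      if CML.sat K (CML.exge N r φk) v then 1 else 0 := by
  have hsum : (∑ u ∈ K.nbrs r v, g u * 1)
      = (((K.nbrs r v).filter (fun u => CML.sat K φk u)).card : ℝ) := by
    simp only [mul_one, hg]
    rw [Finset.sum_boole]
  rw [hsum]
  set c := ((K.nbrs r v).filter (fun u => CML.sat K φk u)).card with hc
  have hsat : CML.sat K (CML.exge N r φk) v ↔ N ≤ c := Iff.rfl
  by_cases h : N ≤ c
  · rw [if_pos (hsat.mpr h)]
    unfold trunc
    have : (1:ℝ) ≤ (c:ℝ) + (-(N:ℝ) + 1) := by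
      have : (N:ℝ) ≤ (c:ℝ) := by exact_mod_cast h
      linarith
    rw [max_eq_right (by linarith), min_eq_right this]
  · rw [if_neg (fun hs => h (hsat.mp hs))]
    unfold trunc
    have hlt : c < N := Nat.lt_of_not_le h
    have : c + 1 ≤ N := hlt
    have : (c:ℝ) + 1 ≤ (N:ℝ) := by exact_mod_cast this
    rw [max_eq_left (by linarith), min_eq_left (by norm_num)]
end

section
/- If two rooted entities in two knowledge graphs receive the same relational WL color at round L, then the depth-L unraveling trees of those entities are isomorphic via an isomorphism sending one root to the other. -/
attribute [local instance] Classical.propDecidable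

/-- Canonical relational WL colors: with an injective hash, the round-`L` color
of an entity is determined by (and determines) the pair of its previous color
and, for each relation, the multiset of previous colors of its in-neighbors. -/
def WLColor (Rel P : Type) : ℕ → Type
  | 0 => Set P
  | L + 1 => WLColor Rel P L × (Rel → Multiset (WLColor Rel P L))

/-- The relational WL color refinement `c^L(v)`. -/
noncomputable def KG.wl {V Rel P : Type} [Fintype V] (K : KG V Rel P) :
    (L : ℕ) → V → WLColor Rel P L
  | 0, v => ({p | K.pred p v} : Set P)
  | L + 1, v => (K.wl L v, fun r => (K.nbrs r v).val.map (K.wl L))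

def WLColor.atoms {Rel P : Type} : (L : ℕ) → WLColor Rel P L → Set P
  | 0, c => c
  | L + 1, c => WLColor.atoms L c.1

def WLColor.toU {Rel P : Type} : (L : ℕ) → WLColor Rel P L → UTree Rel P L
  | 0, c => c
  | L + 1, c => (WLColor.atoms (L + 1) c, fun r => (c.2 r).map (WLColor.toU L))

lemma unravel_eq_toU_wl {V Rel P : Type} [Fintype V] (K : KG V Rel P) :
    ∀ (L : ℕ) (v : V), K.unravel L v = WLColor.toU L (K.wl L v) := by
  intro L
  induction L with
  | zero => intro v; rfl
  | succ L ih =>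
    intro v
    have hatoms : ∀ (M : ℕ) (w : V), WLColor.atoms M (K.wl M w) = {p | K.pred p w} := by
      intro M
      induction M with
      | zero => intro w; rfl
      | succ M ih2 => intro w; exact ih2 w
    show ((({p | K.pred p v} : Set P), fun r => ((K.nbrs r v).val.map (K.unravel L))) :
        UTree Rel P (L+1)) = _
    refine Prod.ext ?_ ?_
    · exact (hatoms (L+1) v).symm
    · funext r
      show (K.nbrs r v).val.map (K.unravel L)
          = ((K.nbrs r v).val.map (K.wl L)).map (WLColor.toU L)
      rw [Multiset.map_map]
      exact Multiset.map_congr rfl (fun u _ => ih u)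

/-- same relational WL color at round `L` implies isomorphic
depth-`L` unraveling trees (root sent to root). -/
theorem wl_color_eq_implies_unravel_iso {V V' Rel P : Type} [Fintype V] [Fintype V']
    (K : KG V Rel P) (K' : KG V' Rel P) (v : V) (v' : V') (L : ℕ)
    (h : K.wl L v = K'.wl L v') : K.unravel L v = K'.unravel L v' := by
  rw [unravel_eq_toU_wl, unravel_eq_toU_wl, h]
end

section
/- If the depth-L unraveling trees of v in K and v' in K' are isomorphic via an isomorphism sending v to v', then the relational WL refinement assigns the same color to v and v' at round L. -/
attribute [local instance] Classical.propDecidable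

noncomputable def truncU {Rel P : Type} : (L : ℕ) → UTree Rel P (L + 1) → UTree Rel P L
  | 0, t => t.1
  | L + 1, t => (t.1, fun r => (t.2 r).map (truncU L))

lemma truncU_unravel {V Rel P : Type} [Fintype V] (K : KG V Rel P) :
    ∀ (L : ℕ) (v : V), truncU L (K.unravel (L + 1) v) = K.unravel L v := by
  intro L
  induction L with
  | zero => intro v; rfl
  | succ L ih =>
      intro v
      show (_, fun r => ((K.nbrs r v).val.map (K.unravel (L+1))).map (truncU L)) = _
      refine Prod.ext rfl ?_
      funext r
      show Multiset.map (truncU L) (Multiset.map (K.unravel (L+1)) (K.nbrs r v).val) = _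
      rw [Multiset.map_map]
      exact congrArg (fun f => Multiset.map f (K.nbrs r v).val) (funext fun u => ih u)

noncomputable def toWL {Rel P : Type} : (L : ℕ) → UTree Rel P L → WLColor Rel P L
  | 0, t => t
  | L + 1, t => (toWL L (truncU L t), fun r => (t.2 r).map (toWL L))

lemma wl_eq_toWL {V Rel P : Type} [Fintype V] (K : KG V Rel P) :
    ∀ (L : ℕ) (v : V), K.wl L v = toWL L (K.unravel L v) := by
  intro L
  induction L with
  | zero => intro v; rfl
  | succ L ih =>
      intro v
      show (K.wl L v, fun r => (K.nbrs r v).val.map (K.wl L)) =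
        (toWL L (truncU L (K.unravel (L+1) v)),
          fun r => ((K.nbrs r v).val.map (K.unravel L)).map (toWL L))
      rw [truncU_unravel K L v]
      refine Prod.ext (ih v) ?_
      funext r
      show Multiset.map (K.wl L) (K.nbrs r v).val =
        Multiset.map (toWL L) (Multiset.map (K.unravel L) (K.nbrs r v).val)
      rw [Multiset.map_map]
      exact congrArg (fun f => Multiset.map f (K.nbrs r v).val) (funext fun u => ih u)

/-- isomorphic depth-`L` unraveling trees (root sent to root)
imply the same relational WL color at round `L`. -/
theorem unravel_iso_implies_wl_color_eq {V V' Rel P : Type} [Fintype V] [Fintype V']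
    (K : KG V Rel P) (K' : KG V' Rel P) (v : V) (v' : V') (L : ℕ)
    (h : K.unravel L v = K'.unravel L v') : K.wl L v = K'.wl L v' := by
  rw [wl_eq_toWL K L v, wl_eq_toWL K' L v', h]
end
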